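/- Let E be a real-valued function defined on bipartite states of every local dimension which is invariant under local isometries (E(V ρ V†) = E(ρ) whenever V = V_A ⊗ V_B with V_A, V_B isometries on Alice's and Bob's systems respectively). If E satisfies the binary flag equality E(p ρ⊗P₀ + (1−p) σ⊗P₁) = p E(ρ) + (1−p) E(σ) for all bipartite states ρ, σ of equal local dimension and all p ∈ [0,1], then E satisfies the general FLAGS condition: E(∑_{i=0}^{m−1} p_i ρ_i ⊗ |i⟩⟨i|) = ∑_{i=0}^{m−1} p_i E(ρ_i) for every m, every probability distribution (p_0,…,p_{m−1}), every family of bipartite states ρ_i of equal local dimension, and orthogonal flag states |0⟩,…,|m−1⟩ held by Alice. -/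

import Mathlib

open Matrix Filter
open scoped Classical ComplexOrder

noncomputable section

/-- A bipartite matrix of local dimension `d`: rows and columns are indexed by
pairs `(a, b)` with `a` Alice's index and `b` Bob's index. -/
abbrev BMat (d : ℕ) : Type := Matrix (Fin d × Fin d) (Fin d × Fin d) ℂ

/-- `ρ` is a bipartite state: positive semidefinite with trace one. -/
def IsState {d : ℕ} (ρ : BMat d) : Prop := ρ.PosSemidef ∧ ρ.trace = 1

/-- Regrouping of indices used to define the tensor product of bipartite states. -/
def tensorEquiv (d₁ d₂ : ℕ) :
    ((Fin d₁ × Fin d₁) × (Fin d₂ × Fin d₂)) ≃ (Fin (d₁ * d₂) × Fin (d₁ * d₂)) :=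
  (Equiv.prodProdProdComm (Fin d₁) (Fin d₁) (Fin d₂) (Fin d₂)).trans
    (Equiv.prodCongr finProdFinEquiv finProdFinEquiv)

/-- Tensor product of bipartite states: Kronecker product, reindexed so that
Alice's systems are grouped together and Bob's systems are grouped together. -/
def tensor {d₁ d₂ : ℕ} (ρ : BMat d₁) (σ : BMat d₂) : BMat (d₁ * d₂) :=
  Matrix.reindex (tensorEquiv d₁ d₂) (tensorEquiv d₁ d₂)
    (Matrix.kroneckerMap (· * ·) ρ σ)

/-- Transport a bipartite matrix along an equality of dimensions. -/
def castDim {d d' : ℕ} (h : d = d') (ρ : BMat d) : BMat d' :=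
  Matrix.reindex (Equiv.prodCongr (finCongr h) (finCongr h))
    (Equiv.prodCongr (finCongr h) (finCongr h)) ρ

/-- `tpow ρ n` is the `n`-fold tensor power `ρ^⊗n`. -/
def tpow {d : ℕ} (ρ : BMat d) : (n : ℕ) → BMat (d ^ n)
  | 0 => castDim (pow_zero d).symm (1 : BMat 1)
  | n + 1 => castDim (by ring) (tensor ρ (tpow ρ n))

/-- Partial trace over Bob's system. -/
def trB {d : ℕ} (M : BMat d) : Matrix (Fin d) (Fin d) ℂ :=
  Matrix.of fun a a' => ∑ b : Fin d, M (a, b) (a', b)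

/-- Von Neumann entropy `S(ρ) = −tr[ρ log₂ ρ]`, computed via the eigenvalues
(with the convention `0 log 0 = 0`, and junk value `0` on non-Hermitian input). -/
def vnEntropy {n : Type*} [Fintype n] [DecidableEq n] (M : Matrix n n ℂ) : ℝ :=
  if h : M.IsHermitian then
    -∑ i, h.eigenvalues i * Real.logb 2 (h.eigenvalues i)
  else 0

/-- Entropy of entanglement of a pure state: `S(tr_B |ψ⟩⟨ψ|)`. -/
def entropyOfEntanglement {d : ℕ} (ψ : Fin d × Fin d → ℂ) : ℝ :=
  vnEntropy (trB (Matrix.vecMulVec ψ (star ψ)))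

/-- Entanglement of formation: the infimum of `∑ pᵢ S(tr_B |ψᵢ⟩⟨ψᵢ|)` over all
finite pure-state decompositions `ρ = ∑ pᵢ |ψᵢ⟩⟨ψᵢ|`. -/
def EF {d : ℕ} (ρ : BMat d) : ℝ :=
  sInf { x : ℝ | ∃ (k : ℕ) (p : Fin k → ℝ) (ψ : Fin k → (Fin d × Fin d → ℂ)),
    (∀ i, 0 ≤ p i) ∧ (∑ i, p i = 1) ∧
    (∀ i, ∑ j, ‖ψ i j‖ ^ 2 = 1) ∧
    ρ = ∑ i, (p i : ℂ) • Matrix.vecMulVec (ψ i) (star (ψ i)) ∧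
    x = ∑ i, p i * entropyOfEntanglement (ψ i) }

/-- Entanglement cost: `E_C(ρ) = lim_{n→∞} E_F(ρ^⊗n)/n`. -/
def EC {d : ℕ} (ρ : BMat d) : ℝ :=
  limUnder atTop (fun n : ℕ => EF (tpow ρ n) / n)

/-- Regrouping of indices used to define flagged mixtures. -/
def flagEquiv (m d : ℕ) :
    ((Fin m × Fin d) × (Fin m × Fin d)) ≃ (Fin (m * d) × Fin (m * d)) :=
  Equiv.prodCongr finProdFinEquiv finProdFinEquiv

/-- The flagged mixture `∑ᵢ pᵢ ρᵢ ⊗ |i⟩⟨i|`, where Alice holds an `m`-dimensional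
flag register (Bob's side is padded with the fixed pure state `|0⟩⟨0|` so that the
result is a bipartite state of local dimension `m*d`). -/
def mflagged {d m : ℕ} (p : Fin m → ℝ) (ρ : Fin m → BMat d) : BMat (m * d) :=
  Matrix.reindex (flagEquiv m d) (flagEquiv m d)
    (Matrix.of fun x y =>
      if x.1.1 = y.1.1 ∧ (x.2.1 : ℕ) = 0 ∧ (y.2.1 : ℕ) = 0 then
        (p x.1.1 : ℂ) * (ρ x.1.1) (x.1.2, x.2.2) (y.1.2, y.2.2)
      else 0)

/-- The binary flagged mixture `p ρ⊗P₀ + (1−p) σ⊗P₁`, where Alice holds a qubit flag. -/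
def flagged {d : ℕ} (p : ℝ) (ρ σ : BMat d) : BMat (2 * d) :=
  mflagged ![p, 1 - p] ![ρ, σ]

-- ====== auxiliary development ======

/-- 0/1 matrix of a function. -/
def emb {ι κ : Type*} [DecidableEq κ] (f : ι → κ) : Matrix κ ι ℂ :=
  Matrix.of fun x a => if x = f a then 1 else 0

lemma emb_conjTranspose_mul_emb {ι κ : Type*} [Fintype ι] [Fintype κ] [DecidableEq ι]
    [DecidableEq κ] {f : ι → κ} (hf : Function.Injective f) : (emb f)ᴴ * emb f = 1 := by
  ext a b
  simp only [Matrix.mul_apply, Matrix.conjTranspose_apply, emb, Matrix.of_apply,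
    Matrix.one_apply]
  by_cases h : a = b
  · subst h
    rw [Finset.sum_eq_single (f a)] <;> simp +contextual
  · rw [Finset.sum_eq_zero, if_neg h]
    intro x _
    split_ifs with h1 h2
    · exact absurd (hf (h1 ▸ h2)) h
    all_goals simp
lemma emb_mul_emb {ι κ τ : Type*} [Fintype κ] [DecidableEq κ] [DecidableEq τ]
    (g : κ → τ) (f : ι → κ) : emb g * emb f = emb (g ∘ f) := by
  ext x a
  simp only [Matrix.mul_apply, emb, Matrix.of_apply, Function.comp_apply]
  rw [Finset.sum_eq_single (f a)] <;> simp +contextual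

lemma kron_emb {ι₁ κ₁ ι₂ κ₂ : Type*} [DecidableEq κ₁] [DecidableEq κ₂]
    (f : ι₁ → κ₁) (g : ι₂ → κ₂) :
    Matrix.kroneckerMap (· * ·) (emb f) (emb g) = emb (Prod.map f g) := by
  ext ⟨x1, x2⟩ ⟨a1, a2⟩
  simp only [Matrix.kroneckerMap_apply, emb, Matrix.of_apply, Prod.map, Prod.mk.injEq,
    ite_and, ite_mul, one_mul, zero_mul]

/-- Conjugation of a bipartite state by local 0/1 isometries. -/
def place {d D : ℕ} (fA fB : Fin d → Fin D) (ρ : BMat d) : BMat D :=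
  emb (Prod.map fA fB) * ρ * (emb (Prod.map fA fB))ᴴ

lemma place_place {d D D' : ℕ} (gA gB : Fin D → Fin D') (fA fB : Fin d → Fin D)
    (ρ : BMat d) :
    place gA gB (place fA fB ρ) = place (gA ∘ fA) (gB ∘ fB) ρ := by
  simp only [place, ← Matrix.conjTranspose_mul, ← Matrix.mul_assoc, emb_mul_emb,
    Prod.map_comp_map]
  rw [Matrix.mul_assoc, ← Matrix.conjTranspose_mul, emb_mul_emb, Prod.map_comp_map,
    Matrix.mul_assoc]

lemma place_posSemidef {d D : ℕ} (fA fB : Fin d → Fin D) {ρ : BMat d}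
    (h : ρ.PosSemidef) : (place fA fB ρ).PosSemidef :=
  h.mul_mul_conjTranspose_same _

lemma place_trace {d D : ℕ} {fA fB : Fin d → Fin D} (hA : Function.Injective fA)
    (hB : Function.Injective fB) (ρ : BMat d) : (place fA fB ρ).trace = ρ.trace := by
  rw [place, Matrix.trace_mul_cycle, emb_conjTranspose_mul_emb (hA.prodMap hB),
    Matrix.one_mul]

lemma place_smul {d D : ℕ} (fA fB : Fin d → Fin D) (c : ℂ) (ρ : BMat d) :
    place fA fB (c • ρ) = c • place fA fB ρ := by
  simp [place, Matrix.mul_smul, Matrix.smul_mul]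

lemma place_sum {d D : ℕ} (fA fB : Fin d → Fin D) {ι : Type*} (s : Finset ι)
    (ρ : ι → BMat d) :
    place fA fB (∑ i ∈ s, ρ i) = ∑ i ∈ s, place fA fB (ρ i) := by
  simp [place, Matrix.mul_sum, Matrix.sum_mul]

lemma posSemidef_real_smul {n : Type*} [Fintype n] {M : Matrix n n ℂ}
    (hM : M.PosSemidef) {r : ℝ} (hr : 0 ≤ r) : ((r : ℂ) • M).PosSemidef := by
  rw [Matrix.posSemidef_iff_dotProduct_mulVec]
  constructor
  · unfold Matrix.IsHermitian
    rw [Matrix.conjTranspose_smul, hM.1.eq]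
    simp
  · intro x
    rw [Matrix.smul_mulVec, dotProduct_smul, smul_eq_mul]
    exact mul_nonneg (by exact_mod_cast Complex.zero_le_real.mpr hr) (hM.dotProduct_mulVec_nonneg x)

lemma posSemidef_sum {n ι : Type*} [Fintype n] [DecidableEq n] (s : Finset ι)
    (f : ι → Matrix n n ℂ) (h : ∀ i ∈ s, (f i).PosSemidef) :
    (∑ i ∈ s, f i).PosSemidef :=
  Finset.sum_induction f _ (fun _ _ ha hb => ha.add hb) Matrix.PosSemidef.zero h

lemma place_apply_of_inj {d D : ℕ} {fA fB : Fin d → Fin D} (hA : Function.Injective fA)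
    (hB : Function.Injective fB) (ρ : BMat d) (a₁ a₂ b₁ b₂ : Fin d) :
    place fA fB ρ (fA a₁, fB a₂) (fA b₁, fB b₂) = ρ (a₁, a₂) (b₁, b₂) := by
  simp only [place, Matrix.mul_apply, Matrix.conjTranspose_apply, emb, Matrix.of_apply]
  rw [Fintype.sum_eq_single (b₁, b₂)]
  · rw [Fintype.sum_eq_single (a₁, a₂)]
    · simp
    · intro x hx
      rw [if_neg, zero_mul]
      simp only [Prod.map, Prod.mk.injEq]
      rintro ⟨h1, h2⟩
      exact hx (Prod.ext (hA h1).symm (hB h2).symm)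
  · intro x hx
    rw [if_neg, star_zero, mul_zero]
    simp only [Prod.map, Prod.mk.injEq]
    rintro ⟨h1, h2⟩
    exact hx (Prod.ext (hA h1).symm (hB h2).symm)

lemma place_apply_zero {d D : ℕ} (fA fB : Fin d → Fin D) (ρ : BMat d)
    (X Y : Fin D × Fin D)
    (h : X.1 ∉ Set.range fA ∨ X.2 ∉ Set.range fB ∨ Y.1 ∉ Set.range fA ∨
      Y.2 ∉ Set.range fB) :
    place fA fB ρ X Y = 0 := by
  simp only [place, Matrix.mul_apply, Matrix.conjTranspose_apply, emb, Matrix.of_apply]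
  rcases h with h | h | h | h
  · refine Finset.sum_eq_zero fun B _ => ?_
    rw [Finset.sum_eq_zero, zero_mul]
    intro A _
    rw [if_neg, zero_mul]
    rintro rfl
    exact h ⟨A.1, rfl⟩
  · refine Finset.sum_eq_zero fun B _ => ?_
    rw [Finset.sum_eq_zero, zero_mul]
    intro A _
    rw [if_neg, zero_mul]
    rintro rfl
    exact h ⟨A.2, rfl⟩
  · refine Finset.sum_eq_zero fun B _ => ?_
    rw [if_neg, star_zero, mul_zero]
    rintro rfl
    exact h ⟨B.1, rfl⟩
  · refine Finset.sum_eq_zero fun B _ => ?_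
    rw [if_neg, star_zero, mul_zero]
    rintro rfl
    exact h ⟨B.2, rfl⟩

lemma flag_inj {m d : ℕ} (i : Fin m) :
    Function.Injective (fun a : Fin d => finProdFinEquiv (i, a)) := by
  intro a b h
  simpa using finProdFinEquiv.injective h

lemma mem_range_flag {m d : ℕ} {i i₁ : Fin m} {a₁ : Fin d} :
    (finProdFinEquiv (i₁, a₁) ∈ Set.range fun a : Fin d => finProdFinEquiv (i, a)) ↔
      i₁ = i := by
  constructor
  · rintro ⟨a, ha⟩
    exact (Prod.mk.injEq _ _ _ _ ▸ finProdFinEquiv.injective ha.symm).1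
  · rintro rfl
    exact ⟨a₁, rfl⟩

lemma mflagged_eq_sum {d m : ℕ} (hm : 0 < m) (p : Fin m → ℝ) (ρ : Fin m → BMat d) :
    mflagged p ρ = ∑ i, (p i : ℂ) •
      place (fun a => finProdFinEquiv (i, a))
        (fun b => finProdFinEquiv ((⟨0, hm⟩ : Fin m), b)) (ρ i) := by
  ext X Y
  obtain ⟨x1, x2⟩ := X
  obtain ⟨y1, y2⟩ := Y
  obtain ⟨⟨i₁, a₁⟩, rfl⟩ := finProdFinEquiv.surjective x1
  obtain ⟨⟨i₂, a₂⟩, rfl⟩ := finProdFinEquiv.surjective x2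
  obtain ⟨⟨j₁, b₁⟩, rfl⟩ := finProdFinEquiv.surjective y1
  obtain ⟨⟨j₂, b₂⟩, rfl⟩ := finProdFinEquiv.surjective y2
  rw [Matrix.sum_apply]
  have hL : mflagged p ρ (finProdFinEquiv (i₁, a₁), finProdFinEquiv (i₂, a₂))
      (finProdFinEquiv (j₁, b₁), finProdFinEquiv (j₂, b₂)) =
      if i₁ = j₁ ∧ i₂ = ⟨0, hm⟩ ∧ j₂ = ⟨0, hm⟩ then
        (p i₁ : ℂ) * (ρ i₁) (a₁, a₂) (b₁, b₂) else 0 := by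
    simp only [mflagged, flagEquiv, Matrix.reindex_apply, Matrix.submatrix_apply,
      Equiv.prodCongr_symm, Equiv.prodCongr_apply, Prod.map, Equiv.symm_apply_apply,
      Matrix.of_apply]
    congr 2
    simp [Fin.ext_iff]
  rw [hL]
  by_cases h2 : i₂ = ⟨0, hm⟩
  · by_cases h3 : j₂ = ⟨0, hm⟩
    · subst h2 h3
      by_cases h1 : i₁ = j₁
      · subst h1
        rw [if_pos ⟨rfl, rfl, rfl⟩, Finset.sum_eq_single i₁]
        · rw [Matrix.smul_apply, place_apply_of_inj (flag_inj _) (flag_inj _),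
            smul_eq_mul]
        · intro i _ hi
          rw [Matrix.smul_apply, place_apply_zero, smul_zero]
          exact Or.inl (fun hr => hi (mem_range_flag.mp hr).symm)
        · intro h; exact absurd (Finset.mem_univ i₁) h
      · rw [if_neg (fun hc => h1 hc.1), Finset.sum_eq_zero]
        intro i _
        rw [Matrix.smul_apply, place_apply_zero, smul_zero]
        by_cases hi : i₁ = i
        · exact Or.inr (Or.inr (Or.inl (fun hr =>
            h1 (hi.trans (mem_range_flag.mp hr).symm) )))
        · exact Or.inl (fun hr => hi (mem_range_flag.mp hr))
    · rw [if_neg (fun hc => h3 hc.2.2), Finset.sum_eq_zero]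
      intro i _
      rw [Matrix.smul_apply, place_apply_zero, smul_zero]
      exact Or.inr (Or.inr (Or.inr (fun hr => h3 (mem_range_flag.mp hr))))
  · rw [if_neg (fun hc => h2 hc.2.1), Finset.sum_eq_zero]
    intro i _
    rw [Matrix.smul_apply, place_apply_zero, smul_zero]
    exact Or.inr (Or.inl (fun hr => h2 (mem_range_flag.mp hr)))

lemma mflagged_isState {d m : ℕ} (hm : 0 < m) {p : Fin m → ℝ} {ρ : Fin m → BMat d}
    (hp : ∀ i, 0 ≤ p i) (hs : ∑ i, p i = 1) (hρ : ∀ i, IsState (ρ i)) :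
    IsState (mflagged p ρ) := by
  rw [mflagged_eq_sum hm]
  constructor
  · exact posSemidef_sum _ _ fun i _ =>
      posSemidef_real_smul (place_posSemidef _ _ (hρ i).1) (hp i)
  · rw [Matrix.trace_sum]
    have : ∀ i : Fin m, ((p i : ℂ) • place (fun a => finProdFinEquiv (i, a))
        (fun b => finProdFinEquiv ((⟨0, hm⟩ : Fin m), b)) (ρ i)).trace = (p i : ℂ) := by
      intro i
      rw [Matrix.trace_smul, place_trace (flag_inj _) (flag_inj _), (hρ i).2, smul_eq_mul,
        mul_one]
    rw [Finset.sum_congr rfl fun i _ => this i]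
    rw [← Complex.ofReal_sum, hs, Complex.ofReal_one]

def stepMap (m d : ℕ) (hm : 0 < m) : Fin ((m + 1) * d) → Fin (2 * (m * d)) :=
  fun x =>
    Fin.cases (motive := fun _ => Fin (2 * (m * d)))
      (finProdFinEquiv ((0 : Fin 2),
        finProdFinEquiv ((⟨0, hm⟩ : Fin m), (finProdFinEquiv.symm x).2)))
      (fun j => finProdFinEquiv ((1 : Fin 2),
        finProdFinEquiv (j, (finProdFinEquiv.symm x).2)))
      (finProdFinEquiv.symm x).1

lemma stepMap_zero {m d : ℕ} (hm : 0 < m) (a : Fin d) :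
    stepMap m d hm (finProdFinEquiv ((0 : Fin (m + 1)), a)) =
      finProdFinEquiv ((0 : Fin 2), finProdFinEquiv ((⟨0, hm⟩ : Fin m), a)) := by
  unfold stepMap
  rw [Equiv.symm_apply_apply]
  simp

lemma stepMap_succ {m d : ℕ} (hm : 0 < m) (j : Fin m) (a : Fin d) :
    stepMap m d hm (finProdFinEquiv (j.succ, a)) =
      finProdFinEquiv ((1 : Fin 2), finProdFinEquiv (j, a)) := by
  unfold stepMap
  rw [Equiv.symm_apply_apply]
  simp

lemma stepMap_inj {m d : ℕ} (hm : 0 < m) : Function.Injective (stepMap m d hm) := by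
  intro x y h
  obtain ⟨⟨i, a⟩, rfl⟩ := finProdFinEquiv.surjective x
  obtain ⟨⟨i', a'⟩, rfl⟩ := finProdFinEquiv.surjective y
  induction i using Fin.cases with
  | zero =>
    induction i' using Fin.cases with
    | zero =>
      rw [stepMap_zero, stepMap_zero] at h
      have := finProdFinEquiv.injective h
      simp only [Prod.mk.injEq] at this
      have := finProdFinEquiv.injective this.2
      simp only [Prod.mk.injEq] at this
      rw [this.2]
    | succ j' =>
      rw [stepMap_zero, stepMap_succ] at h
      have := (Prod.mk.injEq _ _ _ _ ▸ finProdFinEquiv.injective h).1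
      exact absurd this (by decide)
  | succ j =>
    induction i' using Fin.cases with
    | zero =>
      rw [stepMap_succ, stepMap_zero] at h
      have := (Prod.mk.injEq _ _ _ _ ▸ finProdFinEquiv.injective h).1
      exact absurd this (by decide)
    | succ j' =>
      rw [stepMap_succ, stepMap_succ] at h
      have := (Prod.mk.injEq _ _ _ _ ▸ finProdFinEquiv.injective h).2
      have := finProdFinEquiv.injective this
      simp only [Prod.mk.injEq] at this
      rw [Fin.succ_inj.mpr this.1, this.2]

lemma step_eq {d m : ℕ} (hm : 0 < m) (p : Fin (m + 1) → ℝ) (ρ : Fin (m + 1) → BMat d)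
    (hp0 : p 0 ≠ 1) :
    flagged (p 0)
      (place (fun a => finProdFinEquiv ((⟨0, hm⟩ : Fin m), a))
             (fun b => finProdFinEquiv ((⟨0, hm⟩ : Fin m), b)) (ρ 0))
      (mflagged (fun j => p j.succ / (1 - p 0)) (fun j => ρ j.succ)) =
    place (stepMap m d hm) (stepMap m d hm) (mflagged p ρ) := by
  have h2 : (0 : ℕ) < 2 := by norm_num
  rw [flagged, mflagged_eq_sum h2, mflagged_eq_sum hm, mflagged_eq_sum (Nat.succ_pos m)]
  simp only [place_sum, place_smul, place_place, Matrix.cons_val_zero, Matrix.cons_val_one,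
    Matrix.head_cons]
  rw [Fin.sum_univ_two, Fin.sum_univ_succ]
  simp only [Matrix.cons_val_zero, Matrix.cons_val_one, Matrix.head_cons, place_sum,
    place_smul, place_place, Finset.smul_sum, smul_smul,
    show (⟨0, h2⟩ : Fin 2) = 0 from rfl,
    show (⟨0, Nat.succ_pos m⟩ : Fin (m + 1)) = 0 from rfl]
  have hA0 : (stepMap m d hm ∘ fun a : Fin d => finProdFinEquiv ((0 : Fin (m + 1)), a))
      = ((fun u : Fin (m * d) => finProdFinEquiv ((0 : Fin 2), u)) ∘
          fun a : Fin d => finProdFinEquiv ((⟨0, hm⟩ : Fin m), a)) :=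
    funext fun a => stepMap_zero hm a
  have hAs : ∀ j : Fin m,
      (stepMap m d hm ∘ fun a : Fin d => finProdFinEquiv (j.succ, a))
      = ((fun u : Fin (m * d) => finProdFinEquiv ((1 : Fin 2), u)) ∘
          fun a : Fin d => finProdFinEquiv (j, a)) :=
    fun j => funext fun a => stepMap_succ hm j a
  have hsc : ∀ j : Fin m, ((1 - p 0 : ℝ) : ℂ) * ((p j.succ / (1 - p 0) : ℝ) : ℂ)
      = ((p j.succ : ℝ) : ℂ) := by
    intro j
    rw [← Complex.ofReal_mul, mul_comm, div_mul_cancel₀]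
    exact sub_ne_zero.mpr (Ne.symm hp0)
  rw [hA0]
  simp only [hAs, hsc]


/-- If a function `E` on bipartite states of every local dimension is invariant under
local isometries and satisfies the binary flag equality
`E(p ρ⊗P₀ + (1−p) σ⊗P₁) = p E(ρ) + (1−p) E(σ)` for all states of equal local
dimension and all `p ∈ [0,1]`, then it satisfies the general FLAGS condition
`E(∑ᵢ pᵢ ρᵢ ⊗ |i⟩⟨i|) = ∑ᵢ pᵢ E(ρᵢ)`. -/
theorem binary_flag_equality_implies_FLAGS
    (E : (d : ℕ) → BMat d → ℝ)
    (hIso : ∀ (d d' : ℕ) (ρ : BMat d) (VA VB : Matrix (Fin d') (Fin d) ℂ),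
      VAᴴ * VA = 1 → VBᴴ * VB = 1 → IsState ρ →
      E d' (Matrix.kroneckerMap (· * ·) VA VB * ρ *
          (Matrix.kroneckerMap (· * ·) VA VB)ᴴ) = E d ρ)
    (hBin : ∀ (d : ℕ) (ρ σ : BMat d), IsState ρ → IsState σ → ∀ p : ℝ, 0 ≤ p → p ≤ 1 →
      E (2 * d) (flagged p ρ σ) = p * E d ρ + (1 - p) * E d σ) :
    ∀ (d m : ℕ) (p : Fin m → ℝ) (ρ : Fin m → BMat d),
      (∀ i, 0 ≤ p i) → (∑ i, p i = 1) → (∀ i, IsState (ρ i)) →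
      E (m * d) (mflagged p ρ) = ∑ i, p i * E d (ρ i) := by
  -- E is invariant under placing by injective local maps
  have EP : ∀ (d D : ℕ) (fA fB : Fin d → Fin D) (ρ : BMat d),
      Function.Injective fA → Function.Injective fB → IsState ρ →
      E D (place fA fB ρ) = E d ρ := by
    intro d D fA fB ρ hA hB hρ
    have := hIso d D ρ (emb fA) (emb fB) (emb_conjTranspose_mul_emb hA)
      (emb_conjTranspose_mul_emb hB) hρ
    rwa [kron_emb] at this
  intro d m
  induction m with
  | zero =>
    intro p ρ hp hs hρ
    simp at hs
  | succ m ih =>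
    intro p ρ hp hs hρ
    have hp0le : p 0 ≤ 1 := by
      rw [← hs]
      exact Finset.single_le_sum (fun i _ => hp i) (Finset.mem_univ 0)
    have htail : ∑ j : Fin m, p j.succ = 1 - p 0 := by
      rw [Fin.sum_univ_succ] at hs
      linarith
    by_cases hp0 : p 0 = 1
    · -- all other weights vanish
      have hz : ∀ j : Fin m, p j.succ = 0 := by
        have h0 : ∑ j : Fin m, p j.succ = 0 := by rw [htail, hp0]; ring
        intro j
        exact (Finset.sum_eq_zero_iff_of_nonneg (fun i _ => hp i.succ)).mp h0 j
          (Finset.mem_univ j)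
      have hrw : mflagged p ρ =
          place (fun a => finProdFinEquiv ((0 : Fin (m + 1)), a))
            (fun b => finProdFinEquiv ((⟨0, Nat.succ_pos m⟩ : Fin (m + 1)), b)) (ρ 0) := by
        rw [mflagged_eq_sum (Nat.succ_pos m), Fin.sum_univ_succ]
        simp [hp0, hz, show (⟨0, Nat.succ_pos m⟩ : Fin (m + 1)) = 0 from rfl]
      rw [hrw, EP _ _ _ _ _ (flag_inj _) (flag_inj _) (hρ 0), Fin.sum_univ_succ]
      simp [hp0, hz]
    · have hm : 0 < m := by
        rcases Nat.eq_zero_or_pos m with h0 | h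
        · exfalso
          subst h0
          rw [Fin.sum_univ_one] at hs
          exact hp0 hs
        · exact h
      have h1p : (0 : ℝ) < 1 - p 0 := by
        rcases lt_or_eq_of_le hp0le with h | h
        · linarith
        · exact absurd h hp0
      set q : Fin m → ℝ := fun j => p j.succ / (1 - p 0) with hq
      have hqnn : ∀ j, 0 ≤ q j := fun j => div_nonneg (hp j.succ) (le_of_lt h1p)
      have hqsum : ∑ j, q j = 1 := by
        rw [hq]
        rw [← Finset.sum_div, htail, div_self (ne_of_gt h1p)]
      set w : Fin d → Fin (m * d) := fun a => finProdFinEquiv ((⟨0, hm⟩ : Fin m), a) with hw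
      have hρ0' : IsState (place w w (ρ 0)) := by
        constructor
        · exact place_posSemidef _ _ (hρ 0).1
        · rw [place_trace (flag_inj _) (flag_inj _), (hρ 0).2]
      have hσ : IsState (mflagged q fun j => ρ j.succ) :=
        mflagged_isState hm hqnn hqsum fun j => hρ j.succ
      have hkey := step_eq hm p ρ hp0
      have hstep : E (2 * (m * d)) (flagged (p 0) (place w w (ρ 0))
          (mflagged q fun j => ρ j.succ)) = E ((m + 1) * d) (mflagged p ρ) := by
        rw [hkey]
        have := hIso ((m + 1) * d) (2 * (m * d)) (mflagged p ρ)
          (emb (stepMap m d hm)) (emb (stepMap m d hm))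
          (emb_conjTranspose_mul_emb (stepMap_inj hm))
          (emb_conjTranspose_mul_emb (stepMap_inj hm))
          (mflagged_isState (Nat.succ_pos m) hp hs hρ)
        rw [kron_emb] at this
        exact this
      rw [← hstep, hBin (m * d) _ _ hρ0' hσ (p 0) (hp 0) hp0le,
        EP _ _ _ _ _ (flag_inj _) (flag_inj _) (hρ 0),
        ih q (fun j => ρ j.succ) hqnn hqsum (fun j => hρ j.succ), Fin.sum_univ_succ,
        Finset.mul_sum]
      congr 1
      refine Finset.sum_congr rfl fun j _ => ?_
      rw [← mul_assoc, hq]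
      rw [mul_comm (1 - p 0), div_mul_cancel₀ _ (ne_of_gt h1p)]
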